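/- Let {X_n} have periodic dependence with period d and common marginal distribution function F. For each τ > 0 let x_n(τ) be a sequence of real numbers with n·F̄(x_n(τ)) → τ, and suppose {X_n} satisfies AIM(x_n(τ)) for each τ > 0. If P(M_n ≤ x_n(τ)) converges as n → ∞ for a single value τ > 0, then it converges for all τ > 0, and there exists γ ∈ [0,1] such that P(M_n ≤ x_n(τ)) → e^{−τγ} for every τ > 0. -/

import Mathlib

open MeasureTheory Filter Finset Asymptotics

/-- Probability of an event as a real number. -/
noncomputable def pr {Ω : Type*} [MeasurableSpace Ω] (P : Measure Ω) (A : Set Ω) : ℝ :=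
  (P A).toReal

/-- The event that `X i ≤ x` for every index `i` in the set `S`;
this is the event `{M(S) ≤ x}` where `M(S) = max {X i : i ∈ S}`. -/
def allLe {Ω : Type*} (X : ℕ → Ω → ℝ) (S : Set ℕ) (x : ℝ) : Set Ω :=
  {ω | ∀ i ∈ S, X i ω ≤ x}

/-- `α` is a sequence of AIM mixing coefficients for `X` relative to thresholds `xs`
with separation sequence `q`: for any two intervals `I₁ = [a,b]`, `I₂ = [b+qₙ+1, c]`
contained in `{1,…,n}`, separated by `qₙ`, each of cardinality at least `qₙ`,
the maximum-based discrepancy is bounded by `α n`. -/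
def AIMBound {Ω : Type*} [MeasurableSpace Ω] (P : Measure Ω) (X : ℕ → Ω → ℝ)
    (xs : ℕ → ℝ) (q : ℕ → ℕ) (α : ℕ → ℝ) : Prop :=
  ∀ n a b c : ℕ, 1 ≤ a → a ≤ b → b + q n + 1 ≤ c → c ≤ n →
    q n ≤ b + 1 - a → q n ≤ c - (b + q n) →
    |pr P (allLe X (Set.Icc a b ∪ Set.Icc (b + q n + 1) c) (xs n)) -
      pr P (allLe X (Set.Icc a b) (xs n)) *
        pr P (allLe X (Set.Icc (b + q n + 1) c) (xs n))| ≤ α n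

/-- `X` has periodic dependence with period `d`: any finite-dimensional joint
distribution is invariant under shifting all indices by `d`. -/
def PeriodicDep {Ω : Type*} [MeasurableSpace Ω] (P : Measure Ω) (X : ℕ → Ω → ℝ)
    (d : ℕ) : Prop :=
  ∀ (k : ℕ) (t : Fin k → ℕ), (∀ i, 1 ≤ t i) →
    Measure.map (fun ω (i : Fin k) => X (t i) ω) P =
      Measure.map (fun ω (i : Fin k) => X (t i + d) ω) P


set_option linter.unusedSectionVars false
set_option linter.unusedVariables false
set_option maxHeartbeats 1000000

section Basics

variable {Ω : Type*} [MeasurableSpace Ω] (P : Measure Ω) [IsProbabilityMeasure P]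
  (X : ℕ → Ω → ℝ) (F : ℝ → ℝ)

lemma pr_nonneg (A : Set Ω) : 0 ≤ pr P A := ENNReal.toReal_nonneg

lemma pr_le_one (A : Set Ω) : pr P A ≤ 1 := by
  have := prob_le_one (μ := P) (s := A)
  simpa [pr] using ENNReal.toReal_le_of_le_ofReal zero_le_one (by simpa using this)

lemma pr_mono {A B : Set Ω} (h : A ⊆ B) : pr P A ≤ pr P B :=
  ENNReal.toReal_mono (measure_ne_top _ _) (measure_mono h)

lemma pr_univ : pr P (Set.univ : Set Ω) = 1 := by simp [pr]

lemma allLe_empty (u : ℝ) : allLe X (∅ : Set ℕ) u = Set.univ := by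
  ext ω; simp [allLe]

lemma allLe_mono_set {S T : Set ℕ} (h : S ⊆ T) (u : ℝ) :
    allLe X T u ⊆ allLe X S u := fun ω hω i hi => hω i (h hi)

lemma allLe_mono_level {S : Set ℕ} {u v : ℝ} (h : u ≤ v) :
    allLe X S u ⊆ allLe X S v := fun ω hω i hi => (hω i hi).trans h

lemma pr_le_add_sum (s : Finset ℕ) (A B : Set Ω) (g : ℕ → Set Ω)
    (h : A \ B ⊆ ⋃ i ∈ s, g i) :
    pr P A ≤ pr P B + ∑ i ∈ s, pr P (g i) := by
  have h1 : P A ≤ P B + ∑ i ∈ s, P (g i) := by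
    calc P A ≤ P (B ∪ A \ B) := measure_mono (fun ω hω => by
            by_cases hb : ω ∈ B
            · exact Or.inl hb
            · exact Or.inr ⟨hω, hb⟩)
    _ ≤ P B + P (A \ B) := measure_union_le _ _
    _ ≤ P B + ∑ i ∈ s, P (g i) := by
        gcongr
        exact (measure_mono h).trans (measure_biUnion_finset_le s g)
  have h2 : ((P B + ∑ i ∈ s, P (g i)).toReal : ℝ) = pr P B + ∑ i ∈ s, pr P (g i) := by
    rw [ENNReal.toReal_add (measure_ne_top _ _) (by
      exact (ENNReal.sum_lt_top.2 (fun i _ => (measure_lt_top P _))).ne), ENNReal.toReal_sum]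
    · rfl
    · intro i _; exact measure_ne_top _ _
  calc pr P A ≤ (P B + ∑ i ∈ s, P (g i)).toReal :=
        ENNReal.toReal_mono (by
          exact (ENNReal.add_lt_top.2 ⟨measure_lt_top _ _,
            ENNReal.sum_lt_top.2 fun i _ => measure_lt_top P _⟩).ne) h1
  _ = _ := h2

variable (hmeas : ∀ i, Measurable (X i))
  (hF : ∀ i, 1 ≤ i → ∀ t : ℝ, pr P {ω | X i ω ≤ t} = F t)

include hmeas hF

/-- P(X_i > u) = 1 - F u for 1 ≤ i. -/
lemma pr_gt {i : ℕ} (hi : 1 ≤ i) (u : ℝ) :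
    pr P {ω | u < X i ω} = 1 - F u := by
  have hc : ({ω | u < X i ω} : Set Ω) = {ω | X i ω ≤ u}ᶜ := by
    ext ω; simp [not_le]
  have hm : MeasurableSet {ω | X i ω ≤ u} := measurableSet_le (hmeas i) measurable_const
  have := prob_compl_eq_one_sub (μ := P) hm
  rw [hc, pr, this, ENNReal.toReal_sub_of_le (prob_le_one) (by simp)]
  simp [← hF i hi u, pr]

/-- P(u < X_i ≤ v) = F v - F u for 1 ≤ i, u ≤ v. -/
lemma pr_between {i : ℕ} (hi : 1 ≤ i) {u v : ℝ} (huv : u ≤ v) :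
    pr P ({ω | X i ω ≤ v} \ {ω | X i ω ≤ u}) = F v - F u := by
  have hm : MeasurableSet {ω | X i ω ≤ u} := measurableSet_le (hmeas i) measurable_const
  have hsub : ({ω | X i ω ≤ u} : Set Ω) ⊆ {ω | X i ω ≤ v} := fun ω h => le_trans h huv
  rw [pr, measure_diff hsub hm.nullMeasurableSet (measure_ne_top _ _),
    ENNReal.toReal_sub_of_le (measure_mono hsub) (measure_ne_top _ _)]
  rw [← hF i hi u, ← hF i hi v]; rfl

/-- Trimming lemma: removing indices costs at most (card removed)·(1-F u). -/
lemma pr_trim {s t : Finset ℕ} (hst : s ⊆ t) (h1 : ∀ i ∈ t, 1 ≤ i) (u : ℝ) :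
    pr P (allLe X ↑s u) ≤ pr P (allLe X ↑t u) + ((t.card - s.card : ℕ) : ℝ) * (1 - F u) := by
  have hsub : allLe X ↑s u \ allLe X ↑t u ⊆ ⋃ i ∈ t \ s, {ω | u < X i ω} := by
    intro ω hω
    obtain ⟨hs, ht⟩ := hω
    simp only [allLe, Set.mem_setOf_eq] at ht
    push_neg at ht
    obtain ⟨i, hit, hgt⟩ := ht
    have his : i ∉ s := fun his => absurd (hs i (by exact_mod_cast his)) (not_le.2 hgt)
    exact Set.mem_biUnion (Finset.mem_sdiff.2 ⟨by exact_mod_cast hit, his⟩) hgt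
  have := pr_le_add_sum P (t \ s) (allLe X ↑s u) (allLe X ↑t u) (fun i => {ω | u < X i ω}) hsub
  calc pr P (allLe X ↑s u) ≤ pr P (allLe X ↑t u) + ∑ i ∈ t \ s, pr P {ω | u < X i ω} := this
  _ = pr P (allLe X ↑t u) + ((t.card - s.card : ℕ) : ℝ) * (1 - F u) := by
      rw [Finset.sum_congr rfl (fun i hi => pr_gt P X F hmeas hF (h1 i (Finset.mem_sdiff.1 hi).1) u)]
      rw [Finset.sum_const, Finset.card_sdiff_of_subset hst]
      simp [nsmul_eq_mul]

/-- Level lemma: raising the level from u to v costs at most card·(F v - F u). -/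
lemma pr_level {s : Finset ℕ} (h1 : ∀ i ∈ s, 1 ≤ i) {u v : ℝ} (huv : u ≤ v) :
    pr P (allLe X ↑s v) ≤ pr P (allLe X ↑s u) + (s.card : ℝ) * (F v - F u) := by
  have hsub : allLe X ↑s v \ allLe X ↑s u ⊆
      ⋃ i ∈ s, ({ω | X i ω ≤ v} \ {ω | X i ω ≤ u}) := by
    intro ω hω
    obtain ⟨hs, ht⟩ := hω
    simp only [allLe, Set.mem_setOf_eq] at ht
    push_neg at ht
    obtain ⟨i, hit, hgt⟩ := ht
    exact Set.mem_biUnion (by exact_mod_cast hit)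
      ⟨hs i hit, not_le.2 hgt⟩
  have := pr_le_add_sum P s (allLe X ↑s v) (allLe X ↑s u)
    (fun i => ({ω | X i ω ≤ v} \ {ω | X i ω ≤ u})) hsub
  calc pr P (allLe X ↑s v) ≤ pr P (allLe X ↑s u) + ∑ i ∈ s, pr P ({ω | X i ω ≤ v} \ {ω | X i ω ≤ u}) := this
  _ = pr P (allLe X ↑s u) + (s.card : ℝ) * (F v - F u) := by
      rw [Finset.sum_congr rfl (fun i hi => pr_between P X F hmeas hF (h1 i hi) huv)]
      rw [Finset.sum_const]; simp [nsmul_eq_mul]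

omit hmeas in
lemma F_mono : Monotone F := by
  intro u v huv
  rw [← hF 1 le_rfl u, ← hF 1 le_rfl v]
  exact pr_mono P (fun ω h => le_trans h huv)

omit hmeas in
lemma F_le_one (u : ℝ) : F u ≤ 1 := by
  rw [← hF 1 le_rfl u]; exact pr_le_one P _

omit hmeas in
lemma F_nonneg (u : ℝ) : 0 ≤ F u := by
  rw [← hF 1 le_rfl u]; exact pr_nonneg P _

end Basics

section Shift

variable {Ω : Type*} [MeasurableSpace Ω] (P : Measure Ω) [IsProbabilityMeasure P]
  (X : ℕ → Ω → ℝ) {d : ℕ}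


lemma pr_shift (hper : PeriodicDep P X d) (hmeas : ∀ i, Measurable (X i))
    {a : ℕ} (ha : 1 ≤ a) (b : ℕ) (u : ℝ) :
    pr P (allLe X (Set.Icc a b) u) = pr P (allLe X (Set.Icc (a + d) (b + d)) u) := by
  by_cases hab : a ≤ b
  · obtain ⟨k, hk⟩ : ∃ k, b + 1 = a + k := ⟨b + 1 - a, by omega⟩
    have hk1 : 1 ≤ k := by omega
    set G : Set (Fin k → ℝ) := Set.pi Set.univ (fun _ => Set.Iic u) with hG
    have hGm : MeasurableSet G := MeasurableSet.univ_pi (fun i => measurableSet_Iic)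
    have hmap : ∀ c : ℕ, Measurable (fun ω (i : Fin k) => X (c + i) ω) := fun c =>
      measurable_pi_lambda _ (fun i => hmeas _)
    have hpre : ∀ c : ℕ, (fun ω (i : Fin k) => X (c + i) ω) ⁻¹' G
        = allLe X (Set.Icc c (c + k - 1)) u := by
      intro c
      ext ω
      simp only [Set.mem_preimage, hG, Set.mem_pi, Set.mem_univ, forall_true_left,
        Set.mem_Iic, allLe, Set.mem_setOf_eq, Set.mem_Icc]
      constructor
      · rintro h j ⟨hj1, hj2⟩
        have hjk : j - c < k := by omega
        have := h ⟨j - c, hjk⟩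
        simpa [Nat.add_sub_cancel' hj1] using this
      · intro h i
        exact h (c + i) ⟨Nat.le_add_right _ _, by omega⟩
    have key := hper k (fun i => a + i) (fun i => by show 1 ≤ a + (i:ℕ); omega)
    have h2 : (fun ω (i : Fin k) => X ((fun i : Fin k => a + (i : ℕ)) i + d) ω)
        = (fun ω (i : Fin k) => X ((a + d) + (i : ℕ)) ω) := by
      funext ω i; congr 1; show a + (i:ℕ) + d = a + d + (i:ℕ); omega
    rw [h2] at key
    have e1 : P (allLe X (Set.Icc a b) u)
        = Measure.map (fun ω (i : Fin k) => X (a + i) ω) P G := by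
      have hb : a + k - 1 = b := by omega
      rw [Measure.map_apply (hmap a) hGm, hpre a, hb]
    have e2 : P (allLe X (Set.Icc (a + d) (b + d)) u)
        = Measure.map (fun ω (i : Fin k) => X ((a + d) + i) ω) P G := by
      have hb : a + d + k - 1 = b + d := by omega
      rw [Measure.map_apply (hmap (a + d)) hGm, hpre (a + d), hb]
    unfold pr
    rw [e1, e2, key]
  · have h1 : Set.Icc a b = (∅ : Set ℕ) := Set.Icc_eq_empty (by omega)
    have h2 : Set.Icc (a + d) (b + d) = (∅ : Set ℕ) := Set.Icc_eq_empty (by omega)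
    rw [h1, h2]

lemma pr_shift_mul (hper : PeriodicDep P X d) (hmeas : ∀ i, Measurable (X i))
    {a : ℕ} (ha : 1 ≤ a) (b : ℕ) (u : ℝ) (c : ℕ) :
    pr P (allLe X (Set.Icc a b) u) = pr P (allLe X (Set.Icc (a + c * d) (b + c * d)) u) := by
  induction c with
  | zero => simp
  | succ c ih =>
      have e : ∀ y : ℕ, y + (c + 1) * d = y + c * d + d := fun y => by ring
      rw [ih, e a, e b]
      exact pr_shift P X hper hmeas (by omega) (b + c * d) u

end Shift

section RealHelpers

/-- Telescoping: if each step multiplies by v up to error ε, k steps give k·ε. -/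
lemma teles (a : ℕ → ℝ) (v ε : ℝ) (ha : ∀ j, |a j| ≤ 1) (hv0 : 0 ≤ v) (hv1 : v ≤ 1)
    (hε : 0 ≤ ε) : ∀ k : ℕ, (∀ j < k, |a (j + 1) - a j * v| ≤ ε) →
    |a k - a 0 * v ^ k| ≤ k * ε := by
  intro k
  induction k with
  | zero => simp
  | succ k ih =>
      intro h
      have h1 : |a (k + 1) - a k * v| ≤ ε := h k (by omega)
      have h2 : |a k - a 0 * v ^ k| ≤ k * ε := ih (fun j hj => h j (by omega))
      calc |a (k + 1) - a 0 * v ^ (k + 1)|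
          = |(a (k + 1) - a k * v) + (a k - a 0 * v ^ k) * v| := by ring_nf
        _ ≤ |a (k + 1) - a k * v| + |(a k - a 0 * v ^ k) * v| := abs_add_le _ _
        _ ≤ ε + (k * ε) * 1 := by
            refine add_le_add h1 ?_
            rw [abs_mul]
            refine mul_le_mul h2 (by rw [abs_of_nonneg hv0]; exact hv1) (abs_nonneg _) ?_
            exact mul_nonneg (Nat.cast_nonneg _) hε
        _ = (k + 1 : ℕ) * ε := by push_cast; ring
      
/-- |v^k - w^k| ≤ k |v - w| for v, w ∈ [0,1]. -/
lemma pow_diff_le (v w : ℝ) (hv0 : 0 ≤ v) (hv1 : v ≤ 1) (hw0 : 0 ≤ w) (hw1 : w ≤ 1) :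
    ∀ k : ℕ, |v ^ k - w ^ k| ≤ k * |v - w| := by
  intro k
  induction k with
  | zero => simp
  | succ k ih =>
      calc |v ^ (k + 1) - w ^ (k + 1)|
          = |(v - w) * v ^ k + (v ^ k - w ^ k) * w| := by ring_nf
        _ ≤ |(v - w) * v ^ k| + |(v ^ k - w ^ k) * w| := abs_add_le _ _
        _ ≤ |v - w| * 1 + (k * |v - w|) * 1 := by
            rw [abs_mul, abs_mul]
            refine add_le_add ?_ ?_
            · exact mul_le_mul_of_nonneg_left
                (by rw [abs_of_nonneg (pow_nonneg hv0 k)]; exact pow_le_one₀ hv0 hv1)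
                (abs_nonneg _)
            · refine mul_le_mul ih (by rw [abs_of_nonneg hw0]; exact hw1) (abs_nonneg _) ?_
              exact mul_nonneg (Nat.cast_nonneg _) (abs_nonneg _)
        _ = (k + 1 : ℕ) * |v - w| := by push_cast; ring

open Filter in
/-- Extraction of k-th roots of limits for [0,1]-valued sequences. -/
lemma root_extract {a : ℕ → ℝ} {c : ℝ} {k : ℕ} (hk : 1 ≤ k)
    (ha0 : ∀ n, 0 ≤ a n) (hc : Tendsto (fun n => a n ^ k) atTop (nhds c)) :
    Tendsto a atTop (nhds (c ^ ((k : ℝ)⁻¹))) := by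
  have hb : ∀ n, a n = (a n ^ k) ^ ((k : ℝ)⁻¹) := by
    intro n
    rw [← Real.rpow_natCast (a n) k, ← Real.rpow_mul (ha0 n)]
    rw [mul_inv_cancel₀ (by positivity), Real.rpow_one]
  have hcont : ContinuousAt (fun y : ℝ => y ^ ((k : ℝ)⁻¹)) c := by
    apply Real.continuousAt_rpow_const
    right
    positivity
  have h2 := hcont.tendsto.comp hc
  have heq : (fun y : ℝ => y ^ ((k : ℝ)⁻¹)) ∘ (fun n => a n ^ k) = a := by
    funext n; exact (hb n).symm
  rw [heq] at h2
  exact h2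

end RealHelpers

section MoreBounds

variable {Ω : Type*} [MeasurableSpace Ω] (P : Measure Ω) [IsProbabilityMeasure P]
  (X : ℕ → Ω → ℝ) (F : ℝ → ℝ)
  (hmeas : ∀ i, Measurable (X i))
  (hF : ∀ i, 1 ≤ i → ∀ t : ℝ, pr P {ω | X i ω ≤ t} = F t)

include hmeas hF

lemma pr_trim_abs {s t : Finset ℕ} (hst : s ⊆ t) (h1 : ∀ i ∈ t, 1 ≤ i) (u : ℝ) :
    |pr P (allLe X ↑t u) - pr P (allLe X ↑s u)| ≤ ((t.card - s.card : ℕ) : ℝ) * (1 - F u) := by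
  have hmono : pr P (allLe X ↑t u) ≤ pr P (allLe X ↑s u) :=
    pr_mono P (allLe_mono_set X (by exact_mod_cast Finset.coe_subset.2 hst) u)
  have htrim := pr_trim P X F hmeas hF hst h1 u
  rw [abs_sub_comm, abs_of_nonneg (by linarith)]
  linarith

lemma pr_level_abs {s : Finset ℕ} (h1 : ∀ i ∈ s, 1 ≤ i) (u v : ℝ) :
    |pr P (allLe X ↑s u) - pr P (allLe X ↑s v)| ≤ (s.card : ℝ) * |F u - F v| := by
  rcases le_total u v with h | h
  · have hmono : pr P (allLe X ↑s u) ≤ pr P (allLe X ↑s v) :=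
      pr_mono P (allLe_mono_level X h)
    have hlev := pr_level P X F hmeas hF h1 h
    rw [abs_sub_comm, abs_of_nonneg (by linarith),
      abs_sub_comm, abs_of_nonneg (sub_nonneg.2 (F_mono P X F hF h))]
    linarith
  · have hmono : pr P (allLe X ↑s v) ≤ pr P (allLe X ↑s u) :=
      pr_mono P (allLe_mono_level X h)
    have hlev := pr_level P X F hmeas hF h1 h
    rw [abs_of_nonneg (by linarith), abs_of_nonneg (sub_nonneg.2 (F_mono P X F hF h))]
    linarith

lemma pr_boole (n : ℕ) (u : ℝ) :
    1 - (n : ℝ) * (1 - F u) ≤ pr P (allLe X (Set.Icc 1 n) u) := by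
  have := pr_trim P X F hmeas hF (s := ∅) (t := Finset.Icc 1 n)
    (Finset.empty_subset _) (fun i hi => (Finset.mem_Icc.1 hi).1) u
  simp only [Finset.coe_empty, allLe_empty, pr_univ, Finset.card_empty, Nat.sub_zero,
    Nat.card_Icc, Finset.coe_Icc] at this
  have hcard : ((n + 1 - 1 : ℕ) : ℝ) = (n : ℝ) := by norm_num
  rw [hcard] at this
  linarith

end MoreBounds


section Block

open Filter MeasureTheory

variable {Ω : Type*} [MeasurableSpace Ω] (P : Measure Ω)
  [IsProbabilityMeasure P]
  (X : ℕ → Ω → ℝ) (F : ℝ → ℝ) {d : ℕ}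
  (hd : 1 ≤ d) (hper : PeriodicDep P X d)
  (hmeas : ∀ i, Measurable (X i))
  (hF : ∀ i, 1 ≤ i → ∀ t : ℝ, pr P {ω | X i ω ≤ t} = F t)
  (x : ℝ → ℕ → ℝ)
  (hx : ∀ τ : ℝ, 0 < τ →
      Tendsto (fun n : ℕ => (n : ℝ) * (1 - F (x τ n))) atTop (nhds τ))

include hd hper hmeas hF hx

/-- The key blocking estimate: `P(M_n ≤ x_n(τ)) - P(M_{m_n} ≤ x_{m_n}(τ/k))^k → 0`
where `m_n = d⌊n/(kd)⌋`. -/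
lemma blockC {τ : ℝ} (hτ : 0 < τ) {k : ℕ} (hk : 1 ≤ k)
    {q : ℕ → ℕ} {α : ℕ → ℝ} (hq1 : ∀ j, 1 ≤ q j)
    (hqo : (fun n : ℕ => (q n : ℝ)) =o[atTop] (fun n : ℕ => (n : ℝ)))
    (hα : Tendsto α atTop (nhds 0)) (hA : AIMBound P X (x τ) q α) :
    Tendsto (fun n => pr P (allLe X (Set.Icc 1 n) (x τ n)) -
      (pr P (allLe X (Set.Icc 1 (d * (n / (k * d)))) (x (τ / k) (d * (n / (k * d)))))) ^ k)
      atTop (nhds 0) := by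
  have hkd : 0 < k * d := by positivity
  set m : ℕ → ℕ := fun n => d * (n / (k * d)) with hm
  have hkm_le : ∀ n, k * m n ≤ n := by
    intro n
    have h1 : k * m n = n / (k * d) * (k * d) := by simp only [hm]; ring
    rw [h1]; exact Nat.div_mul_le_self n (k * d)
  have hn_lt : ∀ n, n < k * m n + k * d := by
    intro n
    have h1 : k * m n = k * d * (n / (k * d)) := by simp only [hm]; ring
    have h2 : n < k * d * (n / (k * d)) + k * d := by
      conv_lhs => rw [← Nat.div_add_mod n (k * d)]
      exact Nat.add_lt_add_left (Nat.mod_lt n hkd) _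
    rw [h1]; exact h2
  have hm_top : Tendsto m atTop atTop := by
    have h1 : Tendsto (fun n : ℕ => n / (k * d)) atTop atTop :=
      (Filter.map_div_atTop_eq_nat (k * d) hkd).le
    exact tendsto_atTop_mono (fun n => Nat.le_mul_of_pos_left _ (by omega)) h1
  have hbig : ∀ᶠ n in atTop, 4 * (k * d) * q n ≤ n ∧ 2 * (k * d) ≤ n := by
    have h1 := hqo.def (show (0:ℝ) < 1 / (4 * ((k:ℝ) * d)) by positivity)
    filter_upwards [h1, eventually_ge_atTop (2 * (k * d))] with n hn1 hn2
    refine ⟨?_, hn2⟩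
    rw [Real.norm_eq_abs, Real.norm_eq_abs, abs_of_nonneg (by positivity),
      abs_of_nonneg (by positivity), div_mul_eq_mul_div, one_mul,
      le_div_iff₀ (by positivity)] at hn1
    have : ((4 * (k * d) * q n : ℕ) : ℝ) ≤ (n : ℝ) := by
      push_cast
      nlinarith [hn1]
    exact_mod_cast this
  have h2q : ∀ᶠ n in atTop, 2 * q n ≤ m n ∧ 1 ≤ m n := by
    filter_upwards [hbig] with n hn
    obtain ⟨h4, h2⟩ := hn
    have ha := hkm_le n
    have hb := hn_lt n
    constructor
    · have hkk : k * (2 * q n) ≤ k * m n := by nlinarith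
      exact Nat.le_of_mul_le_mul_left hkk (by omega)
    · nlinarith
  have hone : Tendsto (fun n : ℕ => 1 - F (x τ n)) atTop (nhds 0) := by
    have h1 : Tendsto (fun n : ℕ => ((n:ℝ) * (1 - F (x τ n))) * (n : ℝ)⁻¹) atTop
        (nhds (τ * 0)) := (hx τ hτ).mul tendsto_inv_atTop_nhds_zero_nat
    rw [mul_zero] at h1
    apply h1.congr'
    filter_upwards [eventually_ge_atTop 1] with n hn
    have : (n : ℝ) ≠ 0 := by positivity
    field_simp
  have hqF : Tendsto (fun n : ℕ => (q n : ℝ) * (1 - F (x τ n))) atTop (nhds 0) := by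
    have hqn : Tendsto (fun n : ℕ => (q n : ℝ) / (n : ℝ)) atTop (nhds 0) := by
      refine (Asymptotics.isLittleO_iff_tendsto' ?_).1 hqo
      filter_upwards [eventually_ge_atTop 1] with n hn h
      exact absurd h (by positivity)
    have h1 : Tendsto (fun n : ℕ => ((q n : ℝ) / n) * ((n:ℝ) * (1 - F (x τ n)))) atTop
        (nhds (0 * τ)) := hqn.mul (hx τ hτ)
    rw [zero_mul] at h1
    apply h1.congr'
    filter_upwards [eventually_ge_atTop 1] with n hn
    have : (n : ℝ) ≠ 0 := by positivity
    field_simp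
  have hm_div : Tendsto (fun n : ℕ => (m n : ℝ) / n) atTop (nhds (1 / k)) := by
    apply tendsto_of_tendsto_of_tendsto_of_le_of_le'
      (g := fun n : ℕ => 1 / (k:ℝ) - (d : ℝ) / n) (h := fun _ : ℕ => 1 / (k:ℝ))
    · have hdn : Tendsto (fun n : ℕ => (d : ℝ) / n) atTop (nhds 0) :=
        tendsto_const_nhds.div_atTop tendsto_natCast_atTop_atTop
      simpa using tendsto_const_nhds.sub hdn
    · exact tendsto_const_nhds
    · filter_upwards [eventually_ge_atTop 1] with n hn
      have ha := hn_lt n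
      have hn0 : (0:ℝ) < n := by exact_mod_cast hn
      have hk0 : (0:ℝ) < k := by exact_mod_cast hk
      have hc : (n : ℝ) < k * m n + k * d := by exact_mod_cast ha
      rw [sub_le_iff_le_add, ← add_div, div_le_div_iff₀ hk0 hn0]
      have hm0 : (0:ℝ) ≤ m n := by positivity
      nlinarith
    · filter_upwards [eventually_ge_atTop 1] with n hn
      have ha := hkm_le n
      have hn0 : (0:ℝ) < n := by exact_mod_cast hn
      have hk0 : (0:ℝ) < k := by exact_mod_cast hk
      have hc : (k : ℝ) * m n ≤ n := by exact_mod_cast ha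
      rw [div_le_div_iff₀ hn0 hk0]
      nlinarith
  have hAlim : Tendsto (fun n : ℕ => (m n : ℝ) * (1 - F (x (τ/k) (m n)))) atTop
      (nhds (τ / k)) := by
    have hk0 : (0:ℝ) < k := by exact_mod_cast hk
    exact (hx (τ/k) (by positivity)).comp hm_top
  have hBlim : Tendsto (fun n : ℕ => (m n : ℝ) * (1 - F (x τ n))) atTop (nhds (τ / k)) := by
    have h1 : Tendsto (fun n : ℕ => ((m n : ℝ) / n) * ((n:ℝ) * (1 - F (x τ n)))) atTop
        (nhds ((1/k) * τ)) := hm_div.mul (hx τ hτ)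
    have h2 : (1/(k:ℝ)) * τ = τ / k := by ring
    rw [h2] at h1
    apply h1.congr'
    filter_upwards [eventually_ge_atTop 1] with n hn
    have : (n : ℝ) ≠ 0 := by positivity
    field_simp
  have hD : Tendsto (fun n : ℕ => |(m n : ℝ) * (1 - F (x (τ/k) (m n))) -
      (m n : ℝ) * (1 - F (x τ n))|) atTop (nhds 0) := by
    have h1 := (hAlim.sub hBlim).abs
    simpa using h1
  have hα' : Tendsto (fun n => max (α n) 0) atTop (nhds 0) := by
    have h1 := hα.max (tendsto_const_nhds : Filter.Tendsto (fun _ : ℕ => (0:ℝ)) Filter.atTop (nhds 0))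
    simpa using h1
  set g : ℕ → ℝ := fun n => ((k*d : ℕ) : ℝ) * (1 - F (x τ n)) +
      (((k - 1 : ℕ)) : ℝ) * (max (α n) 0 + (q n : ℝ) * (1 - F (x τ n))) +
      (((k - 1 : ℕ)) : ℝ) * ((q n : ℝ) * (1 - F (x τ n))) +
      (k : ℝ) * |(m n : ℝ) * (1 - F (x (τ/k) (m n))) - (m n : ℝ) * (1 - F (x τ n))| with hg
  have hg0 : Tendsto g atTop (nhds 0) := by
    rw [hg]
    have h1 := (((hone.const_mul (((k*d:ℕ)):ℝ)).add
      ((hα'.add hqF).const_mul (((k-1:ℕ)):ℝ))).add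
      (hqF.const_mul (((k-1:ℕ)):ℝ))).add (hD.const_mul ((k:ℕ):ℝ))
    simpa using h1
  apply squeeze_zero_norm' _ hg0
  filter_upwards [hbig, h2q] with n hbign h2qn
  obtain ⟨h2q', hm1⟩ := h2qn
  set u : ℝ := x τ n with hu
  set Q : ℕ := q n with hQ
  set mm : ℕ := m n with hmm
  set W : ℝ := pr P (allLe X (Set.Icc 1 mm) (x (τ/k) mm)) with hW
  have hQ1 : 1 ≤ Q := hq1 n
  have hFu1 : F u ≤ 1 := F_le_one P X F hF u
  have hFu0 : 0 ≤ F u := F_nonneg P X F hF u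
  have hkmn : k * mm ≤ n := hkm_le n
  have hnlt : n < k * mm + k * d := hn_lt n
  set a : ℕ → ℝ := fun j => pr P (allLe X (Set.Icc 1 ((j+1)*mm)) u) with ha
  set v : ℝ := pr P (allLe X (Set.Icc (Q+1) mm) u) with hv
  have ha01 : ∀ j, 0 ≤ a j ∧ a j ≤ 1 := fun j => ⟨pr_nonneg P _, pr_le_one P _⟩
  have hv0 : 0 ≤ v := pr_nonneg P _
  have hv1 : v ≤ 1 := pr_le_one P _
  set ε : ℝ := max (α n) 0 + (Q : ℝ) * (1 - F u) with hε
  have hε0 : 0 ≤ ε := by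
    have : (0:ℝ) ≤ (Q : ℝ) * (1 - F u) := by
      apply mul_nonneg (by positivity); linarith
    have h2 : (0:ℝ) ≤ max (α n) 0 := le_max_right _ _
    linarith
  have hstep : ∀ j, j < k - 1 → |a (j+1) - a j * v| ≤ ε := by
    intro j hj
    set B : ℕ := (j+1)*mm with hB
    set C : ℕ := (j+2)*mm with hC
    have hCB : C = B + mm := by rw [hB, hC]; ring
    have hBC : B + Q + 1 ≤ C := by omega
    have hCn : C ≤ n := by
      have hjk : (j+2) ≤ k := by omega
      calc C = (j+2)*mm := hC
      _ ≤ k * mm := Nat.mul_le_mul_right _ hjk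
      _ ≤ n := hkmn
    have hmB : mm ≤ B := by
      rw [hB]
      exact Nat.le_mul_of_pos_left _ (by omega)
    have hQB : Q ≤ B + 1 - 1 := by omega
    have hQC : Q ≤ C - (B + Q) := by omega
    have haim := hA n 1 B C le_rfl (by omega) (by rw [← hQ]; omega) hCn
      (by rw [← hQ]; omega) (by rw [← hQ]; omega)
    rw [← hQ, ← hu] at haim
    have hshift : pr P (allLe X (Set.Icc (B + Q + 1) C) u) = v := by
      have h1 := pr_shift_mul P X hper hmeas (a := Q + 1) (by omega) mm u ((j+1) * (n / (k*d)))
      have e1 : Q + 1 + (j+1) * (n / (k*d)) * d = B + Q + 1 := by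
        rw [hB, hmm]; simp only [hm]; ring
      have e2 : mm + (j+1) * (n / (k*d)) * d = C := by
        rw [hC, hmm]; simp only [hm]; ring
      rw [e1, e2] at h1
      rw [← h1, hv]
    have htrim : |a (j+1) - pr P (allLe X (Set.Icc 1 B ∪ Set.Icc (B + Q + 1) C) u)|
        ≤ (Q : ℝ) * (1 - F u) := by
      have hsub : (Finset.Icc 1 B ∪ Finset.Icc (B+Q+1) C) ⊆ Finset.Icc 1 C := by
        intro i hi
        simp only [Finset.mem_union, Finset.mem_Icc] at hi ⊢
        omega
      have h1 := pr_trim_abs P X F hmeas hF hsub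
        (fun i hi => (Finset.mem_Icc.1 hi).1) u
      have hcoe : ((Finset.Icc 1 B ∪ Finset.Icc (B+Q+1) C : Finset ℕ) : Set ℕ)
          = Set.Icc 1 B ∪ Set.Icc (B+Q+1) C := by
        simp [Finset.coe_union, Finset.coe_Icc]
      have hcard : (Finset.Icc 1 C).card - (Finset.Icc 1 B ∪ Finset.Icc (B+Q+1) C).card = Q := by
        rw [Finset.card_union_of_disjoint, Nat.card_Icc, Nat.card_Icc, Nat.card_Icc]
        · omega
        · rw [Finset.disjoint_left]
          intro i hi hi'
          simp only [Finset.mem_Icc] at hi hi'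
          omega
      rw [hcoe, hcard, Finset.coe_Icc] at h1
      have hC' : a (j+1) = pr P (allLe X (Set.Icc 1 C) u) := by
        rw [ha]
      rw [hC']
      exact h1
    have habs := abs_sub_le (a (j+1))
      (pr P (allLe X (Set.Icc 1 B ∪ Set.Icc (B + Q + 1) C) u)) (a j * v)
    have hfac : |pr P (allLe X (Set.Icc 1 B ∪ Set.Icc (B + Q + 1) C) u) - a j * v| ≤ α n := by
      have haj : a j = pr P (allLe X (Set.Icc 1 B) u) := by rw [ha]
      rw [haj, ← hshift]
      exact haim
    have hαm : α n ≤ max (α n) 0 := le_max_left _ _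
    rw [hε]
    linarith
  have hteles := teles a v ε
    (fun j => abs_le.2 ⟨by linarith [(ha01 j).1], (ha01 j).2⟩) hv0 hv1 hε0 (k-1) hstep
  -- |a 0 - v| ≤ Q (1 - F u)
  have ha0 : a 0 = pr P (allLe X (Set.Icc 1 mm) u) := by rw [ha]; norm_num
  have ha0v : |a 0 - v| ≤ (Q : ℝ) * (1 - F u) := by
    have hsub : Finset.Icc (Q+1) mm ⊆ Finset.Icc 1 mm := by
      intro i hi
      simp only [Finset.mem_Icc] at hi ⊢
      omega
    have h1 := pr_trim_abs P X F hmeas hF hsub (fun i hi => (Finset.mem_Icc.1 hi).1) u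
    have hcard : (Finset.Icc 1 mm).card - (Finset.Icc (Q+1) mm).card = Q := by
      rw [Nat.card_Icc, Nat.card_Icc]; omega
    rw [hcard, Finset.coe_Icc, Finset.coe_Icc] at h1
    rw [ha0, hv]
    exact h1
  have ha00 : 0 ≤ a 0 := (ha01 0).1
  have ha0le : a 0 ≤ 1 := (ha01 0).2
  -- |a 0 * v^(k-1) - a 0 ^ k| ≤ (k-1) Q (1-F u)
  have hpow1 : |a 0 * v ^ (k-1) - a 0 ^ k| ≤ ((k-1 : ℕ) : ℝ) * ((Q:ℝ) * (1 - F u)) := by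
    have hkk : a 0 ^ k = a 0 * a 0 ^ (k - 1) := by
      conv_lhs => rw [show k = (k-1) + 1 by omega]
      rw [pow_succ]
      ring
    rw [hkk]
    have h1 : |a 0 * v ^ (k-1) - a 0 * a 0 ^ (k-1)| = |a 0| * |v ^ (k-1) - a 0 ^ (k-1)| := by
      rw [← abs_mul]; ring_nf
    rw [h1]
    have h2 := pow_diff_le v (a 0) hv0 hv1 ha00 ha0le (k-1)
    calc |a 0| * |v ^ (k-1) - a 0 ^ (k-1)| ≤ 1 * (((k-1:ℕ):ℝ) * |v - a 0|) := by
          apply mul_le_mul _ h2 (abs_nonneg _) zero_le_one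
          rw [abs_of_nonneg ha00]; exact ha0le
    _ ≤ ((k-1 : ℕ) : ℝ) * ((Q:ℝ) * (1 - F u)) := by
          rw [one_mul]
          apply mul_le_mul_of_nonneg_left _ (Nat.cast_nonneg _)
          rw [abs_sub_comm]
          exact ha0v
  -- |φ - a (k-1)| ≤ kd (1-F u)
  have hout : |pr P (allLe X (Set.Icc 1 n) u) - a (k-1)| ≤ ((k*d : ℕ):ℝ) * (1 - F u) := by
    have hakm : a (k-1) = pr P (allLe X (Set.Icc 1 (k * mm)) u) := by
      rw [ha]
      have : (k - 1 + 1) * mm = k * mm := by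
        congr 1
        omega
      simp only [this]
    have hsub : Finset.Icc 1 (k * mm) ⊆ Finset.Icc 1 n := by
      intro i hi
      simp only [Finset.mem_Icc] at hi ⊢
      omega
    have h1 := pr_trim_abs P X F hmeas hF hsub (fun i hi => (Finset.mem_Icc.1 hi).1) u
    have hcard : (Finset.Icc 1 n).card - (Finset.Icc 1 (k*mm)).card = n - k * mm := by
      rw [Nat.card_Icc, Nat.card_Icc]; omega
    rw [hcard, Finset.coe_Icc, Finset.coe_Icc] at h1
    rw [hakm]
    refine h1.trans ?_
    apply mul_le_mul_of_nonneg_right _ (by linarith)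
    have : n - k * mm ≤ k * d := by omega
    exact_mod_cast Nat.cast_le.2 this
  -- |a 0 ^ k - W ^ k| ≤ k * D n
  have hlev : |a 0 - W| ≤ |(mm : ℝ) * (1 - F (x (τ/k) mm)) - (mm : ℝ) * (1 - F u)| := by
    have h1 := pr_level_abs P X F hmeas hF (s := Finset.Icc 1 mm)
      (fun i hi => (Finset.mem_Icc.1 hi).1) u (x (τ/k) mm)
    rw [Nat.card_Icc, Finset.coe_Icc] at h1
    have hmc : ((mm + 1 - 1 : ℕ) : ℝ) = (mm : ℝ) := by norm_num
    rw [hmc] at h1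
    rw [ha0, hW]
    refine h1.trans (le_of_eq ?_)
    rw [show (mm:ℝ) * (1 - F (x (τ/k) mm)) - (mm:ℝ) * (1 - F u)
        = (mm:ℝ) * (F u - F (x (τ/k) mm)) by ring, abs_mul,
      abs_of_nonneg (show (0:ℝ) ≤ (mm:ℝ) from Nat.cast_nonneg _)]
  have hWk : |a 0 ^ k - W ^ k| ≤ (k : ℝ) *
      |(mm : ℝ) * (1 - F (x (τ/k) mm)) - (mm : ℝ) * (1 - F u)| := by
    have h1 := pow_diff_le (a 0) W ha00 ha0le (pr_nonneg P _) (pr_le_one P _) k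
    refine h1.trans ?_
    exact mul_le_mul_of_nonneg_left hlev (Nat.cast_nonneg _)
  -- assemble
  rw [Real.norm_eq_abs]
  have hfinal : |pr P (allLe X (Set.Icc 1 n) u) - W ^ k| ≤
      ((k*d : ℕ):ℝ) * (1 - F u) + ((k-1:ℕ):ℝ) * ε
      + ((k-1 : ℕ) : ℝ) * ((Q:ℝ) * (1 - F u))
      + (k : ℝ) * |(mm : ℝ) * (1 - F (x (τ/k) mm)) - (mm : ℝ) * (1 - F u)| := by
    clear_value a v ε W u Q mm
    have t1 := abs_sub_le (pr P (allLe X (Set.Icc 1 n) u)) (a (k-1)) (a 0 * v ^ (k-1))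
    have t2 := abs_sub_le (pr P (allLe X (Set.Icc 1 n) u)) (a 0 * v ^ (k-1)) (a 0 ^ k)
    have t3 := abs_sub_le (pr P (allLe X (Set.Icc 1 n) u)) (a 0 ^ k) (W ^ k)
    linarith
  refine hfinal.trans (le_of_eq ?_)
  simp only [hg, hε, hu, hQ, hmm]

end Block

section Fill

open Filter MeasureTheory

variable {Ω : Type*} [MeasurableSpace Ω] (P : Measure Ω)
  [IsProbabilityMeasure P]
  (X : ℕ → Ω → ℝ) (F : ℝ → ℝ) {d : ℕ}
  (hd : 1 ≤ d)
  (hmeas : ∀ i, Measurable (X i))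
  (hF : ∀ i, 1 ≤ i → ∀ t : ℝ, pr P {ω | X i ω ≤ t} = F t)

include hd hmeas hF

/-- If `P(M_n ≤ x_n(σ))` converges along multiples of `d`, it converges. -/
lemma fill {xs : ℕ → ℝ} {σ : ℝ}
    (hxσ : Tendsto (fun n : ℕ => (n : ℝ) * (1 - F (xs n))) atTop (nhds σ))
    {l : ℝ}
    (h : Tendsto (fun j : ℕ => pr P (allLe X (Set.Icc 1 (d * j)) (xs (d * j)))) atTop (nhds l)) :
    Tendsto (fun n : ℕ => pr P (allLe X (Set.Icc 1 n) (xs n))) atTop (nhds l) := by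
  set m : ℕ → ℕ := fun n => d * (n / d) with hm
  have hd0 : 0 < d := hd
  have hmle : ∀ n, m n ≤ n := fun n => Nat.mul_div_le n d
  have hlt : ∀ n, n < m n + d := by
    intro n
    have h2 : n < d * (n / d) + d := by
      conv_lhs => rw [← Nat.div_add_mod n d]
      exact Nat.add_lt_add_left (Nat.mod_lt n hd0) _
    simpa [hm] using h2
  have hm_top : Tendsto m atTop atTop := by
    have h1 : Tendsto (fun n : ℕ => n / d) atTop atTop :=
      (Filter.map_div_atTop_eq_nat d hd0).le
    exact tendsto_atTop_mono (fun n => Nat.le_mul_of_pos_left _ hd0) h1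
  have hone : Tendsto (fun n : ℕ => 1 - F (xs n)) atTop (nhds 0) := by
    have h1 : Tendsto (fun n : ℕ => ((n:ℝ) * (1 - F (xs n))) * (n : ℝ)⁻¹) atTop
        (nhds (σ * 0)) := hxσ.mul tendsto_inv_atTop_nhds_zero_nat
    rw [mul_zero] at h1
    apply h1.congr'
    filter_upwards [eventually_ge_atTop 1] with n hn
    have : (n : ℝ) ≠ 0 := by positivity
    field_simp
  have hratio : Tendsto (fun n : ℕ => (m n : ℝ) / n) atTop (nhds 1) := by
    apply tendsto_of_tendsto_of_tendsto_of_le_of_le'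
      (g := fun n : ℕ => 1 - (d : ℝ) / n) (h := fun _ : ℕ => (1:ℝ))
    · have hdn : Tendsto (fun n : ℕ => (d : ℝ) / n) atTop (nhds 0) :=
        tendsto_const_nhds.div_atTop tendsto_natCast_atTop_atTop
      simpa using tendsto_const_nhds.sub hdn
    · exact tendsto_const_nhds
    · filter_upwards [eventually_ge_atTop 1] with n hn
      have hn0 : (0:ℝ) < n := by exact_mod_cast hn
      have hc : (n : ℝ) < m n + d := by exact_mod_cast hlt n
      rw [sub_le_iff_le_add, ← add_div, le_div_iff₀ hn0]
      nlinarith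
    · filter_upwards [eventually_ge_atTop 1] with n hn
      have hn0 : (0:ℝ) < n := by exact_mod_cast hn
      have hc : (m n : ℝ) ≤ n := by exact_mod_cast hmle n
      rw [div_le_one hn0]
      exact hc
  have hmA : Tendsto (fun n : ℕ => (m n : ℝ) * (1 - F (xs (m n)))) atTop (nhds σ) :=
    hxσ.comp hm_top
  have hmB : Tendsto (fun n : ℕ => (m n : ℝ) * (1 - F (xs n))) atTop (nhds σ) := by
    have h1 : Tendsto (fun n : ℕ => ((m n : ℝ) / n) * ((n:ℝ) * (1 - F (xs n)))) atTop
        (nhds (1 * σ)) := hratio.mul hxσ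
    rw [one_mul] at h1
    apply h1.congr'
    filter_upwards [eventually_ge_atTop 1] with n hn
    have : (n : ℝ) ≠ 0 := by positivity
    field_simp
  -- term 1
  have hT1 : Tendsto (fun n : ℕ => pr P (allLe X (Set.Icc 1 n) (xs n))
      - pr P (allLe X (Set.Icc 1 (m n)) (xs n))) atTop (nhds 0) := by
    apply squeeze_zero_norm' (a := fun n : ℕ => (d : ℝ) * (1 - F (xs n)))
    · apply Eventually.of_forall
      intro n
      have hsub : Finset.Icc 1 (m n) ⊆ Finset.Icc 1 n := by
        intro i hi
        simp only [Finset.mem_Icc] at hi ⊢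
        exact ⟨hi.1, hi.2.trans (hmle n)⟩
      have h1 := pr_trim_abs P X F hmeas hF hsub (fun i hi => (Finset.mem_Icc.1 hi).1) (xs n)
      rw [Finset.coe_Icc, Finset.coe_Icc, Nat.card_Icc, Nat.card_Icc] at h1
      rw [Real.norm_eq_abs]
      refine h1.trans ?_
      apply mul_le_mul_of_nonneg_right
      · have : n + 1 - 1 - (m n + 1 - 1) ≤ d := by
          have := hlt n
          omega
        exact_mod_cast Nat.cast_le.2 this
      · have := F_le_one P X F hF (xs n)
        linarith
    · simpa using tendsto_const_nhds.mul hone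
  -- term 2
  have hT2 : Tendsto (fun n : ℕ => pr P (allLe X (Set.Icc 1 (m n)) (xs n))
      - pr P (allLe X (Set.Icc 1 (m n)) (xs (m n)))) atTop (nhds 0) := by
    apply squeeze_zero_norm'
      (a := fun n : ℕ => |(m n : ℝ) * (1 - F (xs (m n))) - (m n : ℝ) * (1 - F (xs n))|)
    · apply Eventually.of_forall
      intro n
      have h1 := pr_level_abs P X F hmeas hF (s := Finset.Icc 1 (m n))
        (fun i hi => (Finset.mem_Icc.1 hi).1) (xs n) (xs (m n))
      rw [Finset.coe_Icc, Nat.card_Icc] at h1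
      rw [Real.norm_eq_abs]
      refine h1.trans (le_of_eq ?_)
      have hc : ((m n + 1 - 1 : ℕ) : ℝ) = (m n : ℝ) := by norm_num
      rw [hc, show (m n : ℝ) * (1 - F (xs (m n))) - (m n : ℝ) * (1 - F (xs n))
          = (m n : ℝ) * (F (xs n) - F (xs (m n))) by ring, abs_mul,
        abs_of_nonneg (show (0:ℝ) ≤ (m n : ℝ) from Nat.cast_nonneg _)]
    · have h1 := (hmA.sub hmB).abs
      simpa using h1
  -- term 3
  have hT3 : Tendsto (fun n : ℕ => pr P (allLe X (Set.Icc 1 (m n)) (xs (m n)))) atTop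
      (nhds l) := by
    have h1 : Tendsto (fun n : ℕ => n / d) atTop atTop :=
      (Filter.map_div_atTop_eq_nat d hd0).le
    exact h.comp h1
  have hsum := (hT1.add hT2).add hT3
  rw [zero_add, zero_add] at hsum
  apply hsum.congr
  intro n
  ring
end Fill

section Conv

open Filter MeasureTheory

lemma tendsto_block_len {k d : ℕ} (hkd : 0 < k * d) :
    Tendsto (fun n : ℕ => d * (n / (k * d))) atTop atTop := by
  have h1 : Tendsto (fun n : ℕ => n / (k * d)) atTop atTop :=
    (Filter.map_div_atTop_eq_nat (k * d) hkd).le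
  have hd0 : 0 < d := by
    rcases Nat.eq_zero_or_pos d with h | h
    · simp [h] at hkd
    · exact h
  exact tendsto_atTop_mono (fun n => Nat.le_mul_of_pos_left _ hd0) h1

variable {Ω : Type*} [MeasurableSpace Ω] (P : Measure Ω)
  [IsProbabilityMeasure P]
  (X : ℕ → Ω → ℝ) (F : ℝ → ℝ) {d : ℕ}
  (hd : 1 ≤ d) (hper : PeriodicDep P X d)
  (hmeas : ∀ i, Measurable (X i))
  (hF : ∀ i, 1 ≤ i → ∀ t : ℝ, pr P {ω | X i ω ≤ t} = F t)
  (x : ℝ → ℕ → ℝ)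
  (hx : ∀ τ : ℝ, 0 < τ →
      Tendsto (fun n : ℕ => (n : ℝ) * (1 - F (x τ n))) atTop (nhds τ))
  (hAIM : ∀ τ : ℝ, 0 < τ → ∃ (q : ℕ → ℕ) (α : ℕ → ℝ),
      (∀ m, 1 ≤ q m) ∧
      ((fun n : ℕ => (q n : ℝ)) =o[atTop] (fun n : ℕ => (n : ℝ))) ∧
      Tendsto α atTop (nhds 0) ∧ AIMBound P X (x τ) q α)

include hd hper hmeas hF hx hAIM

lemma conv_div {τ : ℝ} (hτ : 0 < τ) {k : ℕ} (hk : 1 ≤ k) {L : ℝ}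
    (hL : Tendsto (fun n => pr P (allLe X (Set.Icc 1 n) (x τ n))) atTop (nhds L)) :
    Tendsto (fun n => pr P (allLe X (Set.Icc 1 n) (x (τ / k) n))) atTop
      (nhds (L ^ ((k:ℝ)⁻¹))) := by
  have hkd : 0 < k * d := by positivity
  obtain ⟨q, α, hq1, hqo, hα, hA⟩ := hAIM τ hτ
  have hb := blockC P X F hd hper hmeas hF x hx hτ hk hq1 hqo hα hA
  have hW : Tendsto (fun n =>
      (pr P (allLe X (Set.Icc 1 (d * (n / (k * d)))) (x (τ / k) (d * (n / (k * d)))))) ^ k)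
      atTop (nhds L) := by
    have h2 := hL.sub hb
    rw [sub_zero] at h2
    apply h2.congr
    intro n
    ring
  have hmul : Tendsto (fun j : ℕ => k * d * j) atTop atTop :=
    tendsto_atTop_mono (fun j => Nat.le_mul_of_pos_left _ hkd) tendsto_id
  have hcomp : Tendsto (fun j : ℕ =>
      (pr P (allLe X (Set.Icc 1 (d * j)) (x (τ / k) (d * j)))) ^ k) atTop (nhds L) := by
    have h3 := hW.comp hmul
    apply h3.congr
    intro j
    simp only [Function.comp]
    rw [Nat.mul_div_cancel_left j hkd]
  have hroot := root_extract hk (fun j => pr_nonneg P _) hcomp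
  exact fill P X F hd hmeas hF (hx (τ / k) (by positivity)) hroot

lemma conv_mul {σ : ℝ} (hσ : 0 < σ) {j : ℕ} (hj : 1 ≤ j) {l : ℝ}
    (hl : Tendsto (fun n => pr P (allLe X (Set.Icc 1 n) (x σ n))) atTop (nhds l)) :
    Tendsto (fun n => pr P (allLe X (Set.Icc 1 n) (x ((j : ℝ) * σ) n))) atTop
      (nhds (l ^ j)) := by
  have hjd : 0 < j * d := by positivity
  have hjσ : 0 < (j : ℝ) * σ := by positivity
  obtain ⟨q, α, hq1, hqo, hα, hA⟩ := hAIM ((j : ℝ) * σ) hjσ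
  have hb := blockC P X F hd hper hmeas hF x hx hjσ hj hq1 hqo hα hA
  have hsc : (j : ℝ) * σ / (j : ℝ) = σ := by
    field_simp
  rw [hsc] at hb
  have hW : Tendsto (fun n =>
      (pr P (allLe X (Set.Icc 1 (d * (n / (j * d)))) (x σ (d * (n / (j * d)))))) ^ j)
      atTop (nhds (l ^ j)) := (hl.comp (tendsto_block_len hjd)).pow j
  have hsum := hb.add hW
  rw [zero_add] at hsum
  apply hsum.congr
  intro n
  ring

end Conv

section Main

open Filter MeasureTheory

theorem stmt8_aux {Ω : Type*} [MeasurableSpace Ω] (P : Measure Ω) [IsProbabilityMeasure P]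
    (X : ℕ → Ω → ℝ) (F : ℝ → ℝ)
    (d : ℕ) (hd : 1 ≤ d) (hper : PeriodicDep P X d)
    (hmeas : ∀ i, Measurable (X i))
    (hF : ∀ i, 1 ≤ i → ∀ t : ℝ, pr P {ω | X i ω ≤ t} = F t)
    (x : ℝ → ℕ → ℝ)
    (hx : ∀ τ : ℝ, 0 < τ →
      Tendsto (fun n : ℕ => (n : ℝ) * (1 - F (x τ n))) atTop (nhds τ))
    (hAIM : ∀ τ : ℝ, 0 < τ → ∃ (q : ℕ → ℕ) (α : ℕ → ℝ),
      (∀ m, 1 ≤ q m) ∧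
      ((fun n : ℕ => (q n : ℝ)) =o[atTop] (fun n : ℕ => (n : ℝ))) ∧
      Tendsto α atTop (nhds 0) ∧ AIMBound P X (x τ) q α)
    (hconv : ∃ τ₀ L : ℝ, 0 < τ₀ ∧
      Tendsto (fun n => pr P (allLe X (Set.Icc 1 n) (x τ₀ n))) atTop (nhds L)) :
    ∃ γ : ℝ, 0 ≤ γ ∧ γ ≤ 1 ∧ ∀ τ : ℝ, 0 < τ →
      Tendsto (fun n => pr P (allLe X (Set.Icc 1 n) (x τ n))) atTop
        (nhds (Real.exp (-(τ * γ)))) := by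
  obtain ⟨τ₀, L, hτ₀, hL⟩ := hconv
  have hL0 : 0 ≤ L := ge_of_tendsto hL (Eventually.of_forall fun n => pr_nonneg P _)
  have hL1 : L ≤ 1 := le_of_tendsto hL (Eventually.of_forall fun n => pr_le_one P _)
  have hdiv : ∀ k : ℕ, 1 ≤ k →
      Tendsto (fun n => pr P (allLe X (Set.Icc 1 n) (x (τ₀ / k) n))) atTop
        (nhds (L ^ ((k:ℝ)⁻¹))) :=
    fun k hk => conv_div P X F hd hper hmeas hF x hx hAIM hτ₀ hk hL
  have hlow : ∀ k : ℕ, 1 ≤ k → 1 - τ₀ / k ≤ L ^ ((k:ℝ)⁻¹) := by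
    intro k hk
    refine le_of_tendsto_of_tendsto'
      (tendsto_const_nhds.sub (hx (τ₀ / k) (by positivity))) (hdiv k hk) ?_
    intro n
    exact pr_boole P X F hmeas hF n (x (τ₀ / k) n)
  have hLk : ∀ k : ℕ, 1 ≤ k → (L ^ ((k:ℝ)⁻¹)) ^ k = L := by
    intro k hk
    have hk0 : ((k:ℝ)) ≠ 0 := by positivity
    rw [← Real.rpow_natCast (L ^ ((k:ℝ)⁻¹)) k, ← Real.rpow_mul hL0,
      inv_mul_cancel₀ hk0, Real.rpow_one]
  have hLpos : 0 < L := by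
    rcases lt_or_eq_of_le hL0 with h | h
    · exact h
    have hL0' : L = 0 := h.symm
    set k : ℕ := ⌈τ₀⌉₊ + 1 with hkdef
    have hk1 : 1 ≤ k := by omega
    have h1 := hlow k hk1
    rw [hL0', Real.zero_rpow (by positivity)] at h1
    have h2 : τ₀ < (k : ℝ) := by
      have := Nat.le_ceil τ₀
      have : (⌈τ₀⌉₊ : ℝ) < k := by exact_mod_cast Nat.lt_succ_self _
      have h4 := Nat.le_ceil τ₀
      linarith
    have hk0 : (0:ℝ) < k := by positivity
    have h3 : τ₀ / k < 1 := (div_lt_one hk0).2 h2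
    linarith
  have hLexp : Real.exp (-τ₀) ≤ L := by
    refine le_of_tendsto (Real.tendsto_one_add_div_pow_exp (-τ₀)) ?_
    filter_upwards [eventually_ge_atTop (⌈τ₀⌉₊ + 1)] with k hk
    have hk1 : 1 ≤ k := by omega
    have hk0 : (0:ℝ) < k := by exact_mod_cast hk1
    have hτk : τ₀ / k < 1 := by
      rw [div_lt_one hk0]
      have h4 := Nat.le_ceil τ₀
      have h5 : (⌈τ₀⌉₊ : ℝ) + 1 ≤ k := by exact_mod_cast hk
      linarith
    have h0 : 0 ≤ 1 - τ₀ / k := by linarith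
    have he : (1 + (-τ₀) / (k:ℝ)) = 1 - τ₀ / k := by ring
    rw [he]
    calc (1 - τ₀ / (k:ℝ)) ^ k ≤ (L ^ ((k:ℝ)⁻¹)) ^ k := pow_le_pow_left₀ h0 (hlow k hk1) k
    _ = L := hLk k hk1
  set γ : ℝ := -Real.log L / τ₀ with hγ
  have hγ0 : 0 ≤ γ := div_nonneg (neg_nonneg.2 (Real.log_nonpos hL0 hL1)) hτ₀.le
  have hγ1 : γ ≤ 1 := by
    rw [hγ, div_le_one hτ₀]
    have h1 : Real.log (Real.exp (-τ₀)) ≤ Real.log L :=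
      Real.log_le_log (Real.exp_pos _) hLexp
    rw [Real.log_exp] at h1
    linarith
  have hLγ : L = Real.exp (-(τ₀ * γ)) := by
    rw [hγ]
    have h1 : -(τ₀ * (-Real.log L / τ₀)) = Real.log L := by field_simp
    rw [h1, Real.exp_log hLpos]
  refine ⟨γ, hγ0, hγ1, ?_⟩
  have hrat : ∀ j k : ℕ, 1 ≤ j → 1 ≤ k →
      Tendsto (fun n => pr P (allLe X (Set.Icc 1 n) (x ((j:ℝ) * (τ₀ / k)) n))) atTop
        (nhds (Real.exp (-(((j:ℝ) * (τ₀ / k)) * γ)))) := by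
    intro j k hj hk
    have hσ : (0:ℝ) < τ₀ / k := by positivity
    have h1 := conv_mul P X F hd hper hmeas hF x hx hAIM hσ hj (hdiv k hk)
    have hk0 : ((k:ℝ)) ≠ 0 := by positivity
    have h2 : (L ^ ((k:ℝ)⁻¹)) ^ j = Real.exp (-(((j:ℝ) * (τ₀ / k)) * γ)) := by
      have h3 : (j:ℝ) * (-(τ₀ * γ) * (k:ℝ)⁻¹) = -(((j:ℝ) * (τ₀ / k)) * γ) := by
        rw [div_eq_mul_inv]
        ring
      rw [hLγ, Real.rpow_def_of_pos (Real.exp_pos _), Real.log_exp, ← Real.exp_nat_mul, h3]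
    rw [h2] at h1
    exact h1
  intro τ hτ
  rw [Metric.tendsto_nhds]
  intro ε hε
  have hcont : ContinuousAt (fun t : ℝ => Real.exp (-(t * γ))) τ := by
    have hc : Continuous (fun t : ℝ => Real.exp (-(t * γ))) :=
      Real.continuous_exp.comp ((continuous_id.mul continuous_const).neg)
    exact hc.continuousAt
  rw [Metric.continuousAt_iff] at hcont
  obtain ⟨δ, hδ0, hδ⟩ := hcont (ε/3) (by positivity)
  set η : ℝ := min δ (ε/6) with hη
  have hη0 : 0 < η := lt_min hδ0 (by positivity)
  set k : ℕ := ⌈τ₀ / η⌉₊ + 1 with hkdef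
  have hk1 : 1 ≤ k := by omega
  have hk0 : (0:ℝ) < k := by exact_mod_cast hk1
  have hτ₀k : τ₀ / k < η := by
    rw [div_lt_iff₀ hk0]
    have h4 := Nat.le_ceil (τ₀ / η)
    have h5 : (⌈τ₀ / η⌉₊ : ℝ) + 1 ≤ k := by exact_mod_cast le_refl k
    calc τ₀ = (τ₀ / η) * η := by field_simp
    _ ≤ (⌈τ₀ / η⌉₊ : ℝ) * η := by
        apply mul_le_mul_of_nonneg_right h4 hη0.le
    _ < η * k := by
        rw [mul_comm]
        apply mul_lt_mul_of_pos_left _ hη0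
        linarith
  set j : ℕ := ⌈τ * k / τ₀⌉₊ with hjdef
  have hj1 : 1 ≤ j := by
    rw [hjdef]
    exact Nat.ceil_pos.2 (by positivity)
  set r : ℝ := (j:ℝ) * (τ₀ / k) with hr
  have hr0 : 0 < r := by
    rw [hr]
    have : (0:ℝ) < (j:ℝ) := by exact_mod_cast hj1
    positivity
  have hrτ : |r - τ| ≤ τ₀ / k := by
    have h4 := Nat.le_ceil (τ * k / τ₀)
    have h5 : (j:ℝ) < τ * k / τ₀ + 1 := by
      rw [hjdef]
      exact_mod_cast Nat.ceil_lt_add_one (by positivity)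
    rw [hr, abs_le]
    have hpos : (0:ℝ) ≤ τ₀ / k := by positivity
    constructor
    · have : τ ≤ (j:ℝ) * (τ₀ / k) := by
        calc τ = (τ * k / τ₀) * (τ₀ / k) := by field_simp
        _ ≤ (j:ℝ) * (τ₀ / k) := by
            apply mul_le_mul_of_nonneg_right h4 (by positivity)
      linarith
    · have : (j:ℝ) * (τ₀ / k) < (τ * k / τ₀ + 1) * (τ₀ / k) := by
        apply mul_lt_mul_of_pos_right h5 (by positivity)
      have he : (τ * k / τ₀ + 1) * (τ₀ / k) = τ + τ₀ / k := by field_simp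
      rw [he] at this
      linarith
  have hrδ : |r - τ| < δ := lt_of_le_of_lt hrτ (lt_of_lt_of_le hτ₀k (min_le_left _ _))
  have hrε : |r - τ| < ε/6 := lt_of_le_of_lt hrτ (lt_of_lt_of_le hτ₀k (min_le_right _ _))
  have hexp_close : |Real.exp (-(r * γ)) - Real.exp (-(τ * γ))| < ε/3 := by
    have := hδ (show dist r τ < δ by rwa [Real.dist_eq])
    rwa [Real.dist_eq] at this
  have hrlim := hrat j k hj1 hk1
  rw [← hr] at hrlim
  have hblim : Tendsto (fun n : ℕ => |(n:ℝ) * (1 - F (x τ n)) - (n:ℝ) * (1 - F (x r n))|)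
      atTop (nhds |τ - r|) := ((hx τ hτ).sub (hx r hr0)).abs
  have habs_lt : |τ - r| < ε/3 := by
    rw [abs_sub_comm]
    linarith
  have hb_ev : ∀ᶠ (n : ℕ) in atTop,
      |(n:ℝ) * (1 - F (x τ n)) - (n:ℝ) * (1 - F (x r n))| < ε/3 :=
    hblim.eventually_lt_const habs_lt
  have hr_ev : ∀ᶠ n in atTop,
      |pr P (allLe X (Set.Icc 1 n) (x r n)) - Real.exp (-(r * γ))| < ε/3 := by
    have := (Metric.tendsto_nhds.1 hrlim) (ε/3) (by positivity)
    filter_upwards [this] with n hn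
    rwa [Real.dist_eq] at hn
  filter_upwards [hb_ev, hr_ev] with n hb hr2
  rw [Real.dist_eq]
  have hcmp : |pr P (allLe X (Set.Icc 1 n) (x τ n)) - pr P (allLe X (Set.Icc 1 n) (x r n))|
      ≤ |(n:ℝ) * (1 - F (x τ n)) - (n:ℝ) * (1 - F (x r n))| := by
    have h1 := pr_level_abs P X F hmeas hF (s := Finset.Icc 1 n)
      (fun i hi => (Finset.mem_Icc.1 hi).1) (x τ n) (x r n)
    rw [Finset.coe_Icc, Nat.card_Icc] at h1
    have hc : ((n + 1 - 1 : ℕ) : ℝ) = (n : ℝ) := by norm_num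
    rw [hc] at h1
    refine h1.trans (le_of_eq ?_)
    rw [show (n:ℝ) * (1 - F (x τ n)) - (n:ℝ) * (1 - F (x r n))
        = (n:ℝ) * (F (x r n) - F (x τ n)) by ring, abs_mul,
      abs_of_nonneg (show (0:ℝ) ≤ (n:ℝ) from Nat.cast_nonneg _), abs_sub_comm]
  have t1 := abs_sub_le (pr P (allLe X (Set.Icc 1 n) (x τ n)))
    (pr P (allLe X (Set.Icc 1 n) (x r n))) (Real.exp (-(r * γ)))
  have t2 := abs_sub_le (pr P (allLe X (Set.Icc 1 n) (x τ n)))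
    (Real.exp (-(r * γ))) (Real.exp (-(τ * γ)))
  linarith

end Main


/-- Corollary to Theorem PeriodicThm: for a sequence with periodic
dependence and common marginal `F`, with for each `τ > 0` levels `xₙ(τ)` such that
`n·F̄(xₙ(τ)) → τ` and AIM(xₙ(τ)) holding, if `P(Mₙ ≤ xₙ(τ))` converges for a single
`τ > 0` then it converges for all `τ > 0`, with limit `e^{−τγ}` for some `γ ∈ [0,1]`. -/
theorem stmt8 {Ω : Type*} [MeasurableSpace Ω] (P : Measure Ω) [IsProbabilityMeasure P]
    (X : ℕ → Ω → ℝ) (F : ℝ → ℝ)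
    (d : ℕ) (hd : 1 ≤ d) (hper : PeriodicDep P X d)
    (hmeas : ∀ i, Measurable (X i))
    (hF : ∀ i, 1 ≤ i → ∀ t : ℝ, pr P {ω | X i ω ≤ t} = F t)
    (x : ℝ → ℕ → ℝ)
    (hx : ∀ τ : ℝ, 0 < τ →
      Tendsto (fun n : ℕ => (n : ℝ) * (1 - F (x τ n))) atTop (nhds τ))
    (hAIM : ∀ τ : ℝ, 0 < τ → ∃ (q : ℕ → ℕ) (α : ℕ → ℝ),
      (∀ m, 1 ≤ q m) ∧
      ((fun n : ℕ => (q n : ℝ)) =o[atTop] (fun n : ℕ => (n : ℝ))) ∧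
      Tendsto α atTop (nhds 0) ∧ AIMBound P X (x τ) q α)
    (hconv : ∃ τ₀ L : ℝ, 0 < τ₀ ∧
      Tendsto (fun n => pr P (allLe X (Set.Icc 1 n) (x τ₀ n))) atTop (nhds L)) :
    ∃ γ : ℝ, 0 ≤ γ ∧ γ ≤ 1 ∧ ∀ τ : ℝ, 0 < τ →
      Tendsto (fun n => pr P (allLe X (Set.Icc 1 n) (x τ n))) atTop
        (nhds (Real.exp (-(τ * γ)))) := by
  exact stmt8_aux P X F d hd hper hmeas hF x hx hAIM hconv
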